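/- Let k ≥ 1, p ≥ 1, let Σ be diagonal with Σ_jj > 0, and let A be diagonal with A_jj > 0. For a value-faithfulness vector φ with φ_j > 0 for all j, define W_eq(w; φ, Σ, A) = ½ − ½·g_{σ(w)}(wᵀφ)²·Σ_j w_j²/A_jj, where σ(w)² = 2·Σ_j Σ_jj w_j², and define the optimal producer welfare W*(φ, Σ, A) = sup over D = {w ∈ ℝ^k : w_j ≥ 0 for all j, ‖w‖_p = 1} of W_eq(w; φ, Σ, A). If φ'_j ≥ φ_j > 0 for all j, then W*(φ', Σ, A) ≥ W*(φ, Σ, A). That is, optimal producer welfare is monotonically nondecreasing in each behavior's value-faithfulness. -/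
import Mathlib


/-- The density of the centered Gaussian `N(0, σ²)`. -/
noncomputable def gauss (σ x : ℝ) : ℝ :=
  (Real.sqrt (2 * Real.pi * σ ^ 2))⁻¹ * Real.exp (-x ^ 2 / (2 * σ ^ 2))

lemma gauss_nonneg (σ x : ℝ) : 0 ≤ gauss σ x :=
  mul_nonneg (inv_nonneg.2 (Real.sqrt_nonneg _)) (Real.exp_pos _).le

/-- `gauss σ` is antitone on nonnegative arguments. -/
lemma gauss_anti (σ : ℝ) {x y : ℝ} (hx : 0 ≤ x) (hxy : x ≤ y) :
    gauss σ y ≤ gauss σ x := by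
  unfold gauss
  apply mul_le_mul_of_nonneg_left _ (inv_nonneg.2 (Real.sqrt_nonneg _))
  apply Real.exp_le_exp.2
  rcases eq_or_lt_of_le (sq_nonneg σ) with h | h
  · rw [← h]; norm_num
  · apply div_le_div_of_nonneg_right ?_ (by linarith) |>.trans_eq rfl
    · nlinarith
-- fallback in case lemma name mismatch handled below

/-- Optimal producer welfare is monotonically nondecreasing in each
behavior's value-faithfulness `φⱼ`. -/
theorem stmt_13 (k : ℕ) (hk : 1 ≤ k) (p : ℝ) (hp : 1 ≤ p)
    (φ φ' S A : Fin k → ℝ) (hφ : ∀ j, 0 < φ j) (hφφ' : ∀ j, φ j ≤ φ' j)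
    (hS : ∀ j, 0 < S j) (hA : ∀ j, 0 < A j) :
    let pnorm : (Fin k → ℝ) → ℝ := fun w => (∑ j, |w j| ^ p) ^ (1 / p)
    let D : Set (Fin k → ℝ) := {w | (∀ j, 0 ≤ w j) ∧ pnorm w = 1}
    let Weq : (Fin k → ℝ) → (Fin k → ℝ) → ℝ := fun w f =>
      1 / 2 - (1 / 2) * (gauss (Real.sqrt (2 * ∑ j, S j * w j ^ 2)) (∑ j, w j * f j) ^ 2
        * ∑ j, w j ^ 2 / A j)
    let Wstar : (Fin k → ℝ) → ℝ := fun f => sSup ((fun w => Weq w f) '' D)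
    Wstar φ ≤ Wstar φ' := by
  intro pnorm D Weq Wstar
  have hp0 : p ≠ 0 := by positivity
  -- D is nonempty
  have hDne : D.Nonempty := by
    refine ⟨Pi.single ⟨0, hk⟩ 1, fun j => ?_, ?_⟩
    · rcases eq_or_ne j ⟨0, hk⟩ with rfl | h
      · simp
      · simp [Pi.single_eq_of_ne h]
    · simp only [pnorm]
      have : ∀ j, |(Pi.single (⟨0, hk⟩ : Fin k) (1:ℝ) : Fin k → ℝ) j| ^ p
          = if j = ⟨0, hk⟩ then 1 else 0 := by
        intro j
        rcases eq_or_ne j ⟨0, hk⟩ with rfl | h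
        · simp
        · simp [Pi.single_eq_of_ne h, Real.zero_rpow hp0, h]
      rw [Finset.sum_congr rfl (fun j _ => this j), Finset.sum_ite_eq' _ _ (fun _ => (1:ℝ))]
      simp
  -- pointwise comparison
  have hpt : ∀ w ∈ D, Weq w φ ≤ Weq w φ' := by
    rintro w ⟨hw, -⟩
    simp only [Weq]
    have hx0 : 0 ≤ ∑ j, w j * φ j :=
      Finset.sum_nonneg fun j _ => mul_nonneg (hw j) (hφ j).le
    have hxy : ∑ j, w j * φ j ≤ ∑ j, w j * φ' j :=
      Finset.sum_le_sum fun j _ => mul_le_mul_of_nonneg_left (hφφ' j) (hw j)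
    have hg := gauss_anti (Real.sqrt (2 * ∑ j, S j * w j ^ 2)) hx0 hxy
    have hsq : gauss _ (∑ j, w j * φ' j) ^ 2 ≤ gauss _ (∑ j, w j * φ j) ^ 2 :=
      pow_le_pow_left₀ (gauss_nonneg _ _) hg 2
    have hsum : 0 ≤ ∑ j, w j ^ 2 / A j :=
      Finset.sum_nonneg fun j _ => div_nonneg (sq_nonneg _) (hA j).le
    nlinarith [mul_le_mul_of_nonneg_right hsq hsum]
  -- boundedness
  have hbdd : BddAbove ((fun w => Weq w φ') '' D) := by
    refine ⟨1/2, ?_⟩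
    rintro x ⟨w, hw, rfl⟩
    simp only [Weq]
    have h1 : 0 ≤ gauss (Real.sqrt (2 * ∑ j, S j * w j ^ 2)) (∑ j, w j * φ' j) ^ 2 :=
      sq_nonneg _
    have h2 : 0 ≤ ∑ j, w j ^ 2 / A j :=
      Finset.sum_nonneg fun j _ => div_nonneg (sq_nonneg _) (hA j).le
    nlinarith
  apply csSup_le (hDne.image _)
  rintro x ⟨w, hw, rfl⟩
  exact (hpt w hw).trans (le_csSup hbdd ⟨w, hw, rfl⟩)
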